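/- For every Borel measurable set s ⊆ ℝ, |N(0, 5/36)(s) − N(0, 1/12)(s)| < 0.12295, where N(0, v) denotes the Gaussian probability measure on ℝ with mean 0 and variance v. Equivalently, the total variation distance between the centered Gaussian measures with variances 5/36 and 1/12 is less than 0.12295. -/

import Mathlib

open MeasureTheory Real ProbabilityTheory NNReal Finset


lemma exp_neg_bound8 {t : ℝ} (h0 : 0 ≤ t) (h1 : t ≤ 1) :
    |Real.exp (-t) - ∑ m ∈ Finset.range 8, (-t) ^ m / m.factorial| ≤ t ^ 8 * (9 / 322560) := by
  have h := Real.exp_bound (x := -t) (by rwa [abs_neg, abs_of_nonneg h0]) (n := 8) (by norm_num)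
  rw [abs_neg, abs_of_nonneg h0] at h
  convert h using 2
  norm_num [Nat.factorial]

lemma integral_exp_neg_sq (c A : ℝ) (hc : 0 < c) (hA : 0 ≤ A) (h1 : c * A ^ 2 ≤ 1) :
    |(∫ x in (-A)..A, Real.exp (-(c * x ^ 2))) -
      ∑ i ∈ Finset.range 8, (-c) ^ i / i.factorial * ((A ^ (2 * i + 1) - (-A) ^ (2 * i + 1)) / (2 * i + 1))|
      ≤ (c * A ^ 2) ^ 8 * (9 / 322560) * (2 * A) := by
  have hcont : Continuous fun x : ℝ => Real.exp (-(c * x ^ 2)) := by continuity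
  have hint1 : IntervalIntegrable (fun x : ℝ => Real.exp (-(c * x ^ 2))) volume (-A) A :=
    hcont.intervalIntegrable _ _
  have hpcont : Continuous fun x : ℝ => ∑ i ∈ Finset.range 8, (-(c * x ^ 2)) ^ i / i.factorial := by
    continuity
  have hintp : IntervalIntegrable
      (fun x : ℝ => ∑ i ∈ Finset.range 8, (-(c * x ^ 2)) ^ i / i.factorial) volume (-A) A :=
    hpcont.intervalIntegrable _ _
  have hIp : (∫ x in (-A)..A, ∑ i ∈ Finset.range 8, (-(c * x ^ 2)) ^ i / i.factorial)
      = ∑ i ∈ Finset.range 8,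
          (-c) ^ i / i.factorial * ((A ^ (2 * i + 1) - (-A) ^ (2 * i + 1)) / (2 * i + 1)) := by
    rw [intervalIntegral.integral_finset_sum]
    · refine Finset.sum_congr rfl fun i _ => ?_
      have heq : (fun x : ℝ => (-(c * x ^ 2)) ^ i / i.factorial)
          = fun x : ℝ => ((-c) ^ i / i.factorial) * x ^ (2 * i) := by
        funext x; rw [show -(c * x ^ 2) = (-c) * x ^ 2 by ring, mul_pow, ← pow_mul]; ring
      rw [heq, intervalIntegral.integral_const_mul, integral_pow]
      push_cast
      ring
    · intro i _
      exact (by continuity : Continuous fun x : ℝ => (-(c * x ^ 2)) ^ i / (i.factorial : ℝ)).intervalIntegrable _ _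
  rw [← hIp, ← intervalIntegral.integral_sub hint1 hintp, ← Real.norm_eq_abs]
  have := intervalIntegral.norm_integral_le_of_norm_le_const
    (a := -A) (b := A) (C := (c * A ^ 2) ^ 8 * (9 / 322560))
    (f := fun x => Real.exp (-(c * x ^ 2)) - ∑ i ∈ Finset.range 8, (-(c * x ^ 2)) ^ i / i.factorial)
    ?_
  · calc _ ≤ (c * A ^ 2) ^ 8 * (9 / 322560) * |A - (-A)| := this
      _ = (c * A ^ 2) ^ 8 * (9 / 322560) * (2 * A) := by
          rw [abs_of_nonneg (by linarith)]; ring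
  · intro x hx
    have hx2 : x ^ 2 ≤ A ^ 2 := by
      rcases Set.mem_uIoc.mp hx with h | h
      · nlinarith [h.1, h.2]
      · nlinarith [h.1, h.2]
    have ht0 : 0 ≤ c * x ^ 2 := by positivity
    have ht1 : c * x ^ 2 ≤ 1 := le_trans (by nlinarith) h1
    have hb := exp_neg_bound8 ht0 ht1
    rw [Real.norm_eq_abs]
    calc |Real.exp (-(c * x ^ 2)) - ∑ i ∈ Finset.range 8, (-(c * x ^ 2)) ^ i / i.factorial|
        ≤ (c * x ^ 2) ^ 8 * (9 / 322560) := hb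
      _ ≤ (c * A ^ 2) ^ 8 * (9 / 322560) := by
          have : (c * x ^ 2) ^ 8 ≤ (c * A ^ 2) ^ 8 :=
            pow_le_pow_left₀ ht0 (by nlinarith) 8
          nlinarith


lemma J1_bounds : (0.5778849 : ℝ) ≤ (∫ x in (-(0.32622:ℝ))..0.32622, Real.exp (-(18/5 * x ^ 2)))
    ∧ (∫ x in (-(0.32622:ℝ))..0.32622, Real.exp (-(18/5 * x ^ 2))) ≤ 0.577885 := by
  have h := abs_le.mp (integral_exp_neg_sq (18/5) 0.32622 (by norm_num) (by norm_num) (by norm_num))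
  norm_num [Finset.sum_range_succ, Nat.factorial] at h
  constructor <;> linarith [h.1, h.2]

lemma J2_bounds : (0.536585 : ℝ) ≤ (∫ x in (-(0.32622:ℝ))..0.32622, Real.exp (-(6 * x ^ 2)))
    ∧ (∫ x in (-(0.32622:ℝ))..0.32622, Real.exp (-(6 * x ^ 2))) ≤ 0.5365861 := by
  have h := abs_le.mp (integral_exp_neg_sq 6 0.32622 (by norm_num) (by norm_num) (by norm_num))
  norm_num [Finset.sum_range_succ, Nat.factorial] at h
  constructor <;> linarith [h.1, h.2]

lemma Ea_ub : Real.exp (-(6 * (0.32622:ℝ) ^ 2)) ≤ 0.5280752 := by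
  have h := abs_le.mp (exp_neg_bound8 (t := 6 * (0.32622:ℝ) ^ 2) (by norm_num) (by norm_num))
  norm_num [Finset.sum_range_succ, Nat.factorial] at h
  linarith [h.1, h.2]

lemma Eb_lb : (0.6817217 : ℝ) ≤ Real.exp (-(18/5 * (0.32623:ℝ) ^ 2)) := by
  have h := abs_le.mp (exp_neg_bound8 (t := 18/5 * (0.32623:ℝ) ^ 2) (by norm_num) (by norm_num))
  norm_num [Finset.sum_range_succ, Nat.factorial] at h
  linarith [h.1, h.2]

lemma N1 : Real.exp (24/5 * (0.32622:ℝ) ^ 2) ≤ 5/3 := by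
  have h := Real.exp_bound' (x := 24/5 * (0.32622:ℝ) ^ 2) (by norm_num) (by norm_num) (n := 8) (by norm_num)
  calc Real.exp (24/5 * (0.32622:ℝ) ^ 2) ≤ _ := h
    _ ≤ 5/3 := by norm_num [Finset.sum_range_succ, Nat.factorial]

lemma N2 : (5:ℝ)/3 ≤ Real.exp (24/5 * (0.32623:ℝ) ^ 2) := by
  have h := Real.sum_le_exp_of_nonneg (x := 24/5 * (0.32623:ℝ) ^ 2) (by norm_num) 8
  calc (5:ℝ)/3 ≤ ∑ i ∈ Finset.range 8, (24/5 * (0.32623:ℝ) ^ 2) ^ i / i.factorial := by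
        norm_num [Finset.sum_range_succ, Nat.factorial]
    _ ≤ _ := h


lemma f_eq (x : ℝ) : gaussianPDFReal 0 (5/36) x
    = (Real.sqrt (2*π*(5/36)))⁻¹ * Real.exp (-(18/5 * x ^ 2)) := by
  rw [gaussianPDFReal]
  have h : ((5/36 : ℝ≥0) : ℝ) = 5/36 := by norm_num
  rw [h]
  congr 1
  congr 1
  ring

lemma g_eq (x : ℝ) : gaussianPDFReal 0 (1/12) x
    = (Real.sqrt (2*π*(1/12)))⁻¹ * Real.exp (-(6 * x ^ 2)) := by
  rw [gaussianPDFReal]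
  have h : ((1/12 : ℝ≥0) : ℝ) = 1/12 := by norm_num
  rw [h]
  congr 1
  congr 1
  ring

lemma s1_pos : 0 < Real.sqrt (2*π*(5/36)) := Real.sqrt_pos.mpr (by positivity)
lemma s2_pos : 0 < Real.sqrt (2*π*(1/12)) := Real.sqrt_pos.mpr (by positivity)

lemma s1_ub : Real.sqrt (2*π*(5/36)) ≤ 0.9341653 := by
  rw [show (0.9341653:ℝ) = Real.sqrt (0.9341653^2) from (Real.sqrt_sq (by norm_num)).symm]
  apply Real.sqrt_le_sqrt
  nlinarith [Real.pi_lt_d6]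

lemma s2_lb : (0.7236011 : ℝ) ≤ Real.sqrt (2*π*(1/12)) := by
  rw [show (0.7236011:ℝ) = Real.sqrt (0.7236011^2) from (Real.sqrt_sq (by norm_num)).symm]
  apply Real.sqrt_le_sqrt
  nlinarith [Real.pi_gt_d6]

lemma s1_sq : (Real.sqrt (2*π*(5/36)))^2 = 2*π*(5/36) := Real.sq_sqrt (by positivity)
lemma s2_sq : (Real.sqrt (2*π*(1/12)))^2 = 2*π*(1/12) := Real.sq_sqrt (by positivity)

-- key comparison: s2 * exp(-(18/5)x²) vs s1 * exp(-6x²), equivalent to exp((24/5)x²) vs 5/3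
lemma P1 {x : ℝ} (hx : |x| ≤ 0.32622) : gaussianPDFReal 0 (5/36) x ≤ gaussianPDFReal 0 (1/12) x := by
  rw [f_eq, g_eq]
  have h1 := s1_pos; have h2 := s2_pos
  have hx2 : x ^ 2 ≤ (0.32622:ℝ) ^ 2 := by
    have := sq_abs x ▸ pow_le_pow_left₀ (abs_nonneg x) hx 2
    linarith [sq_abs x, pow_le_pow_left₀ (abs_nonneg x) hx 2]
  -- main: s2 * exp(-(18/5)x²) ≤ s1 * exp(-6x²)
  have key : Real.sqrt (2*π*(1/12)) * Real.exp (-(18/5 * x ^ 2))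
      ≤ Real.sqrt (2*π*(5/36)) * Real.exp (-(6 * x ^ 2)) := by
    have hE : Real.exp (24/5 * x ^ 2) ≤ 5/3 :=
      le_trans (Real.exp_le_exp.mpr (by nlinarith)) N1
    -- square both sides
    have hsq : (Real.sqrt (2*π*(1/12)) * Real.exp (-(18/5 * x ^ 2))) ^ 2
        ≤ (Real.sqrt (2*π*(5/36)) * Real.exp (-(6 * x ^ 2))) ^ 2 := by
      rw [mul_pow, mul_pow, s1_sq, s2_sq, sq (Real.exp _), sq (Real.exp _),
        ← Real.exp_add, ← Real.exp_add]
      have hrw : Real.exp (-(18/5 * x ^ 2) + -(18/5 * x ^ 2))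
          = Real.exp (24/5 * x ^ 2) * Real.exp (-(6 * x ^ 2) + -(6 * x ^ 2)) := by
        rw [← Real.exp_add]; congr 1; ring
      rw [hrw]
      have hep : (0:ℝ) < Real.exp (-(6 * x ^ 2) + -(6 * x ^ 2)) := Real.exp_pos _
      have hpi : (0:ℝ) < π := Real.pi_pos
      have hh := mul_le_mul_of_nonneg_left (mul_le_mul_of_nonneg_right hE hep.le) hpi.le
      linarith
    have hl : 0 ≤ Real.sqrt (2*π*(1/12)) * Real.exp (-(18/5 * x ^ 2)) := by positivity
    have hr : 0 ≤ Real.sqrt (2*π*(5/36)) * Real.exp (-(6 * x ^ 2)) := by positivity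
    nlinarith
  rw [inv_mul_le_iff₀ h1]
  rw [show Real.sqrt (2*π*(5/36)) * ((Real.sqrt (2*π*(1/12)))⁻¹ * Real.exp (-(6*x^2)))
      = (Real.sqrt (2*π*(1/12)))⁻¹ * (Real.sqrt (2*π*(5/36)) * Real.exp (-(6*x^2))) by ring,
    ← inv_mul_le_iff₀ (by positivity)]
  calc (Real.sqrt (2*π*(1/12)))⁻¹⁻¹ * Real.exp (-(18/5 * x ^ 2))
      = Real.sqrt (2*π*(1/12)) * Real.exp (-(18/5 * x ^ 2)) := by rw [inv_inv]
    _ ≤ _ := key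

lemma P2 {x : ℝ} (hx : (0.32623:ℝ) ≤ |x|) :
    gaussianPDFReal 0 (1/12) x ≤ gaussianPDFReal 0 (5/36) x := by
  rw [f_eq, g_eq]
  have h1 := s1_pos; have h2 := s2_pos
  have hx2 : (0.32623:ℝ) ^ 2 ≤ x ^ 2 := by
    have h := pow_le_pow_left₀ (by norm_num : (0:ℝ) ≤ 0.32623) hx 2
    calc (0.32623:ℝ)^2 ≤ |x|^2 := h
      _ = x ^ 2 := sq_abs x
  have key : Real.sqrt (2*π*(5/36)) * Real.exp (-(6 * x ^ 2))
      ≤ Real.sqrt (2*π*(1/12)) * Real.exp (-(18/5 * x ^ 2)) := by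
    have hE : (5:ℝ)/3 ≤ Real.exp (24/5 * x ^ 2) :=
      le_trans N2 (Real.exp_le_exp.mpr (by nlinarith))
    have hsq : (Real.sqrt (2*π*(5/36)) * Real.exp (-(6 * x ^ 2))) ^ 2
        ≤ (Real.sqrt (2*π*(1/12)) * Real.exp (-(18/5 * x ^ 2))) ^ 2 := by
      rw [mul_pow, mul_pow, s1_sq, s2_sq, sq (Real.exp _), sq (Real.exp _),
        ← Real.exp_add, ← Real.exp_add]
      have hrw : Real.exp (-(18/5 * x ^ 2) + -(18/5 * x ^ 2))
          = Real.exp (24/5 * x ^ 2) * Real.exp (-(6 * x ^ 2) + -(6 * x ^ 2)) := by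
        rw [← Real.exp_add]; congr 1; ring
      rw [hrw]
      have hep : (0:ℝ) < Real.exp (-(6 * x ^ 2) + -(6 * x ^ 2)) := Real.exp_pos _
      have hpi : (0:ℝ) < π := Real.pi_pos
      have hh := mul_le_mul_of_nonneg_left (mul_le_mul_of_nonneg_right hE hep.le) hpi.le
      linarith
    have hl : 0 ≤ Real.sqrt (2*π*(5/36)) * Real.exp (-(6 * x ^ 2)) := by positivity
    have hr : 0 ≤ Real.sqrt (2*π*(1/12)) * Real.exp (-(18/5 * x ^ 2)) := by positivity
    nlinarith
  rw [inv_mul_le_iff₀ h2]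
  rw [show Real.sqrt (2*π*(1/12)) * ((Real.sqrt (2*π*(5/36)))⁻¹ * Real.exp (-(18/5*x^2)))
      = (Real.sqrt (2*π*(5/36)))⁻¹ * (Real.sqrt (2*π*(1/12)) * Real.exp (-(18/5*x^2))) by ring,
    ← inv_mul_le_iff₀ (by positivity)]
  calc (Real.sqrt (2*π*(5/36)))⁻¹⁻¹ * Real.exp (-(6 * x ^ 2))
      = Real.sqrt (2*π*(5/36)) * Real.exp (-(6 * x ^ 2)) := by rw [inv_inv]
    _ ≤ _ := key

-- monotonicity
lemma P3 {x : ℝ} (hx : (0.32622:ℝ) ≤ |x|) :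
    gaussianPDFReal 0 (1/12) x ≤ gaussianPDFReal 0 (1/12) 0.32622 := by
  rw [g_eq, g_eq]
  have hx2 : (0.32622:ℝ) ^ 2 ≤ x ^ 2 := by
    calc (0.32622:ℝ)^2 ≤ |x|^2 := pow_le_pow_left₀ (by norm_num) hx 2
      _ = x ^ 2 := sq_abs x
  exact mul_le_mul_of_nonneg_left (Real.exp_le_exp.mpr (by nlinarith))
    (by positivity)

lemma P4 {x : ℝ} (hx : |x| ≤ (0.32623:ℝ)) :
    gaussianPDFReal 0 (5/36) 0.32623 ≤ gaussianPDFReal 0 (5/36) x := by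
  rw [f_eq, f_eq]
  have hx2 : x ^ 2 ≤ (0.32623:ℝ) ^ 2 := by
    calc x ^ 2 = |x|^2 := (sq_abs x).symm
      _ ≤ (0.32623:ℝ)^2 := pow_le_pow_left₀ (abs_nonneg x) hx 2
  exact mul_le_mul_of_nonneg_left (Real.exp_le_exp.mpr (by nlinarith)) (by positivity)


theorem gaussian_tv_lt :
    ∀ s : Set ℝ, MeasurableSet s →
      |((gaussianReal 0 (5 / 36) s).toReal) - ((gaussianReal 0 (1 / 12) s).toReal)|
        < 0.12295 := by
  intro s hs
  have h5 : (5/36 : ℝ≥0) ≠ 0 := by norm_num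
  have h12 : (1/12 : ℝ≥0) ≠ 0 := by norm_num
  set f : ℝ → ℝ := gaussianPDFReal 0 (5/36) with hfdef
  set g : ℝ → ℝ := gaussianPDFReal 0 (1/12) with hgdef
  have hf_nn : ∀ x, 0 ≤ f x := fun x => gaussianPDFReal_nonneg _ _ x
  have hg_nn : ∀ x, 0 ≤ g x := fun x => gaussianPDFReal_nonneg _ _ x
  have hf_int : Integrable f := integrable_gaussianPDFReal 0 (5/36)
  have hg_int : Integrable g := integrable_gaussianPDFReal 0 (1/12)
  have hFs : (gaussianReal 0 (5/36) s).toReal = ∫ x in s, f x := by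
    rw [gaussianReal_apply_eq_integral 0 h5 s,
      ENNReal.toReal_ofReal (setIntegral_nonneg hs fun x _ => hf_nn x)]
  have hGs : (gaussianReal 0 (1/12) s).toReal = ∫ x in s, g x := by
    rw [gaussianReal_apply_eq_integral 0 h12 s,
      ENNReal.toReal_ofReal (setIntegral_nonneg hs fun x _ => hg_nn x)]
  rw [hFs, hGs]
  set D : ℝ → ℝ := fun x => f x - g x with hD
  have hD_int : Integrable D := hf_int.sub hg_int
  have hnD_int : Integrable (fun x => g x - f x) := hg_int.sub hf_int
  have hφ_int : Integrable (fun x => max (D x) 0) := hD_int.pos_part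
  have hψ_int : Integrable (fun x => max (g x - f x) 0) := hnD_int.pos_part
  have hD_tot : ∫ x, D x = 0 := by
    rw [hD]
    rw [integral_sub hf_int hg_int, integral_gaussianPDFReal_eq_one 0 h5,
      integral_gaussianPDFReal_eq_one 0 h12, sub_self]
  have hψφ : ∫ x, max (g x - f x) 0 = ∫ x, max (D x) 0 := by
    have heq : (fun x => max (g x - f x) 0) = fun x => max (D x) 0 - D x := by
      funext x
      have hgf : g x - f x = -(D x) := by simp [hD]
      rw [hgf]
      rcases le_total (D x) 0 with h | h
      · rw [max_eq_left (neg_nonneg.mpr h), max_eq_right h]; ring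
      · rw [max_eq_right (neg_nonpos.mpr h), max_eq_left h]; ring
    rw [heq, integral_sub hφ_int hD_int, hD_tot, sub_zero]
  have hsD : ∫ x in s, (g x - f x) = -∫ x in s, D x := by
    rw [← integral_neg]
    congr 1 with x
    simp [hD]
  have hkey : |∫ x in s, D x| ≤ ∫ x, max (D x) 0 := by
    rw [abs_le]
    constructor
    · have h1 : ∫ x in s, (g x - f x) ≤ ∫ x in s, max (g x - f x) 0 :=
        integral_mono hnD_int.restrict hψ_int.restrict fun x => le_max_left _ _
      have h2 : ∫ x in s, max (g x - f x) 0 ≤ ∫ x, max (g x - f x) 0 :=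
        setIntegral_le_integral hψ_int (ae_of_all _ fun x => le_max_right _ _)
      rw [hsD] at h1
      rw [hψφ] at h2
      linarith
    · have h1 : ∫ x in s, D x ≤ ∫ x in s, max (D x) 0 :=
        integral_mono hD_int.restrict hφ_int.restrict fun x => le_max_left _ _
      have h2 : ∫ x in s, max (D x) 0 ≤ ∫ x, max (D x) 0 :=
        setIntegral_le_integral hφ_int (ae_of_all _ fun x => le_max_right _ _)
      linarith
  -- now bound ∫ max (D x) 0
  set M : ℝ := g 0.32622 - f 0.32623 with hM
  have hM_nn : 0 ≤ M := by
    have h1 : f 0.32623 ≤ f 0.32622 := P4 (by rw [abs_of_nonneg]; norm_num; norm_num)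
    have h2 : f 0.32622 ≤ g 0.32622 := P1 (by rw [abs_of_nonneg] <;> norm_num)
    simp only [hM]; linarith
  set K : Set ℝ := Set.Ioo (-(0.32622:ℝ)) 0.32622 with hK
  set T : Set ℝ := Set.Ioo (-(0.32623:ℝ)) 0.32623 \ Set.Ioo (-(0.32622:ℝ)) 0.32622 with hT
  have hKmeas : MeasurableSet K := measurableSet_Ioo
  have hTmeas : MeasurableSet T := measurableSet_Ioo.diff measurableSet_Ioo
  have hind1 : Integrable (K.indicator D) := hD_int.indicator hKmeas
  have hTfin : volume T < ⊤ :=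
    lt_of_le_of_lt (measure_mono Set.diff_subset) measure_Ioo_lt_top
  have hind2 : Integrable (T.indicator fun _ => M) := by
    rw [integrable_indicator_iff hTmeas]
    exact (integrableOn_const_iff (C := M)).mpr (Or.inr hTfin)
  have hpoint : ∀ x, max (D x) 0 ≤ D x - K.indicator D x + T.indicator (fun _ => M) x := by
    intro x
    rcases lt_or_ge (|x|) 0.32622 with hxa | hxa
    · have hxK : x ∈ K := by rw [hK, Set.mem_Ioo, ← abs_lt]; exact hxa
      have hxT : x ∉ T := fun h => h.2 hxK
      rw [Set.indicator_of_mem hxK, Set.indicator_of_notMem hxT]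
      have : D x ≤ 0 := by simp only [hD]; linarith [P1 hxa.le]
      simp [this]
    · have hxK : x ∉ K := by
        rw [hK, Set.mem_Ioo, ← abs_lt]; exact not_lt.mpr hxa
      rw [Set.indicator_of_notMem hxK]
      rcases lt_or_ge (|x|) 0.32623 with hxb | hxb
      · have hxT : x ∈ T := ⟨by rw [Set.mem_Ioo, ← abs_lt]; exact hxb, hxK⟩
        rw [Set.indicator_of_mem hxT]
        have hDM : -M ≤ D x := by
          have h1 : g x ≤ g 0.32622 := P3 hxa
          have h2 : f 0.32623 ≤ f x := P4 hxb.le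
          simp only [hD, hM]; linarith
        rcases le_total (D x) 0 with h | h
        · rw [max_eq_right h]; linarith
        · rw [max_eq_left h]; linarith
      · have hxT : x ∉ T := fun h => by
          rw [hT, Set.mem_diff, Set.mem_Ioo, ← abs_lt] at h
          exact absurd h.1 (not_lt.mpr hxb)
        rw [Set.indicator_of_notMem hxT]
        have : 0 ≤ D x := by simp only [hD]; linarith [P2 hxb]
        simp [this]
  have hRHS_int : Integrable (fun x => D x - K.indicator D x + T.indicator (fun _ => M) x) :=
    (hD_int.sub hind1).add hind2
  have hmono : ∫ x, max (D x) 0 ≤ ∫ x, (D x - K.indicator D x + T.indicator (fun _ => M) x) :=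
    integral_mono hφ_int hRHS_int hpoint
  have hRHS_eval : ∫ x, (D x - K.indicator D x + T.indicator (fun _ => M) x)
      = -(∫ x in K, D x) + (volume T).toReal * M := by
    have e1 : ∫ x, (D x - K.indicator D x + T.indicator (fun _ => M) x)
        = (∫ x, (D x - K.indicator D x)) + ∫ x, T.indicator (fun _ => M) x :=
      integral_add (hD_int.sub hind1) hind2
    have e2 : ∫ x, (D x - K.indicator D x) = (∫ x, D x) - ∫ x, K.indicator D x :=
      integral_sub hD_int hind1
    rw [e1, e2, hD_tot, integral_indicator hKmeas, integral_indicator hTmeas,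
      setIntegral_const, smul_eq_mul, measureReal_def]
    ring
  have hvolT : (volume T).toReal = 0.00002 := by
    rw [hT, measure_diff (Set.Ioo_subset_Ioo (by norm_num) (by norm_num))
      measurableSet_Ioo.nullMeasurableSet (by rw [Real.volume_Ioo]; exact ENNReal.ofReal_ne_top),
      Real.volume_Ioo, Real.volume_Ioo,
      ← ENNReal.ofReal_sub _ (by norm_num), ENNReal.toReal_ofReal (by norm_num)]
    norm_num
  -- evaluate ∫ x in K, D x
  have hKD : ∫ x in K, D x
      = (Real.sqrt (2*π*(5/36)))⁻¹ * (∫ x in (-(0.32622:ℝ))..0.32622, Real.exp (-(18/5 * x ^ 2)))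
        - (Real.sqrt (2*π*(1/12)))⁻¹ * (∫ x in (-(0.32622:ℝ))..0.32622, Real.exp (-(6 * x ^ 2))) := by
    have h0 : ∫ x in K, D x = ∫ x in (-(0.32622:ℝ))..0.32622, D x := by
      rw [intervalIntegral.integral_of_le (by norm_num), hK,
        MeasureTheory.integral_Ioc_eq_integral_Ioo]
    have hfi : IntervalIntegrable f volume (-(0.32622:ℝ)) 0.32622 :=
      hf_int.intervalIntegrable
    have hgi : IntervalIntegrable g volume (-(0.32622:ℝ)) 0.32622 :=
      hg_int.intervalIntegrable
    rw [h0]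
    have : ∫ x in (-(0.32622:ℝ))..0.32622, D x
        = (∫ x in (-(0.32622:ℝ))..0.32622, f x) - ∫ x in (-(0.32622:ℝ))..0.32622, g x :=
      intervalIntegral.integral_sub hfi hgi
    rw [this]
    congr 1
    · rw [show f = fun x => (Real.sqrt (2*π*(5/36)))⁻¹ * Real.exp (-(18/5 * x ^ 2)) from
        funext f_eq, intervalIntegral.integral_const_mul]
    · rw [show g = fun x => (Real.sqrt (2*π*(1/12)))⁻¹ * Real.exp (-(6 * x ^ 2)) from
        funext g_eq, intervalIntegral.integral_const_mul]
  -- numeric finish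
  have hs1p := s1_pos; have hs2p := s2_pos
  have hu1 : (0.9341653:ℝ)⁻¹ ≤ (Real.sqrt (2*π*(5/36)))⁻¹ := inv_anti₀ hs1p s1_ub
  have hu2 : (Real.sqrt (2*π*(1/12)))⁻¹ ≤ (0.7236011:ℝ)⁻¹ := inv_anti₀ (by norm_num) s2_lb
  have hu1nn : (0:ℝ) ≤ (Real.sqrt (2*π*(5/36)))⁻¹ := inv_nonneg.mpr hs1p.le
  have hu2nn : (0:ℝ) ≤ (Real.sqrt (2*π*(1/12)))⁻¹ := inv_nonneg.mpr hs2p.le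
  have hMeq : M = (Real.sqrt (2*π*(1/12)))⁻¹ * Real.exp (-(6 * (0.32622:ℝ) ^ 2))
      - (Real.sqrt (2*π*(5/36)))⁻¹ * Real.exp (-(18/5 * (0.32623:ℝ) ^ 2)) := by
    simp only [hM, hfdef, hgdef]
    rw [g_eq, f_eq]
  have t1 : (0.9341653:ℝ)⁻¹ * 0.5778849
      ≤ (Real.sqrt (2*π*(5/36)))⁻¹ * (∫ x in (-(0.32622:ℝ))..0.32622, Real.exp (-(18/5 * x ^ 2))) :=
    mul_le_mul hu1 J1_bounds.1 (by norm_num) hu1nn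
  have t2 : (Real.sqrt (2*π*(1/12)))⁻¹ * (∫ x in (-(0.32622:ℝ))..0.32622, Real.exp (-(6 * x ^ 2)))
      ≤ (0.7236011:ℝ)⁻¹ * 0.5365861 :=
    mul_le_mul hu2 J2_bounds.2 (le_trans (by norm_num) J2_bounds.1) (by norm_num)
  have t3 : (Real.sqrt (2*π*(1/12)))⁻¹ * Real.exp (-(6 * (0.32622:ℝ) ^ 2))
      ≤ (0.7236011:ℝ)⁻¹ * 0.5280752 :=
    mul_le_mul hu2 Ea_ub (Real.exp_pos _).le (by norm_num)
  have t4 : (0.9341653:ℝ)⁻¹ * 0.6817217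
      ≤ (Real.sqrt (2*π*(5/36)))⁻¹ * Real.exp (-(18/5 * (0.32623:ℝ) ^ 2)) :=
    mul_le_mul hu1 Eb_lb (by norm_num) hu1nn
  have hfin : -(∫ x in K, D x) + (volume T).toReal * M < 0.12295 := by
    rw [hvolT, hKD, hMeq]
    have hnum : -((0.9341653:ℝ)⁻¹ * 0.5778849) + (0.7236011:ℝ)⁻¹ * 0.5365861
        + 0.00002 * ((0.7236011:ℝ)⁻¹ * 0.5280752 - (0.9341653:ℝ)⁻¹ * 0.6817217) < 0.12295 := by
      norm_num
    nlinarith [t1, t2, t3, t4]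
  have hgoal : ∫ x in s, D x = (∫ x in s, f x) - ∫ x in s, g x :=
    integral_sub hf_int.restrict hg_int.restrict
  calc |(∫ x in s, f x) - ∫ x in s, g x| = |∫ x in s, D x| := by rw [hgoal]
    _ ≤ ∫ x, max (D x) 0 := hkey
    _ ≤ -(∫ x in K, D x) + (volume T).toReal * M := hmono.trans (le_of_eq hRHS_eval)
    _ < 0.12295 := hfin
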